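/- Let 0<α₁<α₂, h>0, and take parameters (α₀,α₁,α₂,α₃)=(α₁,α₁,α₂,α₂). Then the set {(x,y)∈ℝ⁴×ℝ⁴ : C₁(x)=0, C₂(x,y)=0, H(x,y)=h, J₁(x,y)=√(2α₁h), J₂(x,y)=0} equals the circle {((√α₁·cosθ, √α₁·sinθ, 0, 0), (−√(2h)·sinθ, √(2h)·cosθ, 0, 0)) : θ∈ℝ}, where H=½(y₀²+y₁²+y₂²+y₃²), J₁=x₀y₁−x₁y₀, J₂=x₂y₃−x₃y₂. -/

import Mathlib

noncomputable section

/-- Points of `T*ℝⁿ = ℝⁿ × ℝⁿ`, written `(x, y)`. -/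
abbrev Pt (n : ℕ) := (Fin n → ℝ) × (Fin n → ℝ)

/-- `D(x) = Σᵢ xᵢ²/αᵢ²`. -/
def Dq {n : ℕ} (α : Fin n → ℝ) (x : Fin n → ℝ) : ℝ := ∑ i, (x i)^2 / (α i)^2

/-- Partial derivative of `f` in the direction `xᵢ`. -/
def pdx {n : ℕ} (f : Pt n → ℝ) (p : Pt n) (i : Fin n) : ℝ :=
  fderiv ℝ f p (Pi.single i 1, 0)

/-- Partial derivative of `f` in the direction `yᵢ`. -/
def pdy {n : ℕ} (f : Pt n → ℝ) (p : Pt n) (i : Fin n) : ℝ :=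
  fderiv ℝ f p (0, Pi.single i 1)

/-- The Dirac bracket on `T*ℝⁿ` for the ellipsoid with semi-axes `√(αᵢ)`:
`{f,g} = Σᵢₖ (∂f/∂xᵢ ∂g/∂yₖ − ∂g/∂xᵢ ∂f/∂yₖ)(δᵢₖ − xᵢxₖ/(D αᵢ αₖ))
        − Σᵢₖ (∂f/∂yᵢ)(∂g/∂yₖ)(xᵢyₖ − xₖyᵢ)/(D αᵢ αₖ)`. -/
def dirac {n : ℕ} (α : Fin n → ℝ) (f g : Pt n → ℝ) (p : Pt n) : ℝ :=
  (∑ i, ∑ k,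
    (pdx f p i * pdy g p k - pdx g p i * pdy f p k) *
      ((if i = k then (1:ℝ) else 0) - p.1 i * p.1 k / (Dq α p.1 * α i * α k)))
  - ∑ i, ∑ k,
      pdy f p i * pdy g p k * (p.1 i * p.2 k - p.1 k * p.2 i) / (Dq α p.1 * α i * α k)

/-- The constraint `C₁(x) = Σᵢ xᵢ²/αᵢ − 1`. -/
def C1 {n : ℕ} (α : Fin n → ℝ) (x : Fin n → ℝ) : ℝ := (∑ i, (x i)^2 / α i) - 1

/-- The constraint `C₂(x,y) = Σᵢ xᵢyᵢ/αᵢ`. -/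
def C2 {n : ℕ} (α : Fin n → ℝ) (p : Pt n) : ℝ := ∑ i, p.1 i * p.2 i / α i

/-- The Hamiltonian `H = ½(y₀² + y₁² + y₂² + y₃²)`. -/
def H4 (p : Pt 4) : ℝ := (1/2) * ((p.2 0)^2 + (p.2 1)^2 + (p.2 2)^2 + (p.2 3)^2)

/-- The angular momentum `J₁ = x₀y₁ − x₁y₀`. -/
def Jmom1 (p : Pt 4) : ℝ := p.1 0 * p.2 1 - p.1 1 * p.2 0

/-- The angular momentum `J₂ = x₂y₃ − x₃y₂`. -/
def Jmom2 (p : Pt 4) : ℝ := p.1 2 * p.2 3 - p.1 3 * p.2 2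


set_option maxHeartbeats 1000000 in
lemma stmt7_aux (α₁ α₂ h a b c d e f g k : ℝ) (hα₁ : 0 < α₁) (hα₂ : 0 < α₂) (hh : 0 < h)
    (h1' : α₂ * (a ^ 2 + b ^ 2) + α₁ * (c ^ 2 + d ^ 2) = α₁ * α₂)
    (h3' : e ^ 2 + f ^ 2 + g ^ 2 + k ^ 2 = 2 * h)
    (hJ2 : (a * f - b * e) ^ 2 = 2 * α₁ * h) :
    c = 0 ∧ d = 0 ∧ g = 0 ∧ k = 0 ∧ a * e + b * f = 0 ∧ a ^ 2 + b ^ 2 = α₁ := by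
  have hgknn : (0:ℝ) ≤ g ^ 2 + k ^ 2 := by positivity
  have key : α₂ * (a * e + b * f) ^ 2 + 2 * α₁ * h * (c ^ 2 + d ^ 2)
      + α₁ * (α₂ - (c ^ 2 + d ^ 2)) * (g ^ 2 + k ^ 2) = 0 := by
    linear_combination (e ^ 2 + f ^ 2) * h1' + (α₁ * (α₂ - (c ^ 2 + d ^ 2))) * h3' - α₂ * hJ2
  have hcdle : c ^ 2 + d ^ 2 ≤ α₂ := by nlinarith [sq_nonneg a, sq_nonneg b]
  have hgk : 0 ≤ α₁ * (α₂ - (c ^ 2 + d ^ 2)) * (g ^ 2 + k ^ 2) :=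
    mul_nonneg (mul_nonneg hα₁.le (by linarith)) hgknn
  have hw : 0 ≤ α₂ * (a * e + b * f) ^ 2 := by positivity
  have hcd0 : c ^ 2 + d ^ 2 = 0 := by
    nlinarith [mul_pos hα₁ hh, sq_nonneg c, sq_nonneg d]
  have key2 : α₂ * (a * e + b * f) ^ 2 + α₁ * α₂ * (g ^ 2 + k ^ 2) = 0 := by
    linear_combination key - (2 * α₁ * h - α₁ * (g ^ 2 + k ^ 2)) * hcd0
  have haebf : a * e + b * f = 0 := by
    have h' : (a * e + b * f) ^ 2 = 0 := by
      nlinarith [mul_nonneg (mul_pos hα₁ hα₂).le hgknn, sq_nonneg (a * e + b * f)]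
    exact sq_eq_zero_iff.mp h'
  have hc : c = 0 := by
    have h' : c ^ 2 = 0 := by linarith [sq_nonneg c, sq_nonneg d]
    exact sq_eq_zero_iff.mp h'
  have hd : d = 0 := by
    have h' : d ^ 2 = 0 := by linarith [sq_nonneg c, sq_nonneg d]
    exact sq_eq_zero_iff.mp h'
  have key3 : α₁ * α₂ * (g ^ 2 + k ^ 2) = 0 := by
    linear_combination key2 - α₂ * (a * e + b * f) * haebf
  have hgk0 : g ^ 2 + k ^ 2 = 0 :=
    (mul_eq_zero.mp key3).resolve_left (by positivity)
  have hg : g = 0 := by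
    have h' : g ^ 2 = 0 := by linarith [sq_nonneg g, sq_nonneg k]
    exact sq_eq_zero_iff.mp h'
  have hk : k = 0 := by
    have h' : k ^ 2 = 0 := by linarith [sq_nonneg g, sq_nonneg k]
    exact sq_eq_zero_iff.mp h'
  have hab : a ^ 2 + b ^ 2 = α₁ := by
    have h' : α₂ * (a ^ 2 + b ^ 2) = α₂ * α₁ := by rw [hc, hd] at h1'; linarith
    exact mul_left_cancel₀ (ne_of_gt hα₂) h'
  exact ⟨hc, hd, hg, hk, haebf, hab⟩


set_option maxHeartbeats 1000000 in
/-- the fiber of the energy-momentum map over the corner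
`(h, √(2α₁h), 0)` of the polygon is a single circle. -/
theorem stmt7 (α₁ α₂ h : ℝ) (hα₁ : 0 < α₁) (hα₁₂ : α₁ < α₂) (hh : 0 < h) :
    {p : Pt 4 | C1 ![α₁, α₁, α₂, α₂] p.1 = 0 ∧ C2 ![α₁, α₁, α₂, α₂] p = 0 ∧
      H4 p = h ∧ Jmom1 p = Real.sqrt (2 * α₁ * h) ∧ Jmom2 p = 0}
    = {p : Pt 4 | ∃ θ : ℝ,
        p = (![Real.sqrt α₁ * Real.cos θ, Real.sqrt α₁ * Real.sin θ, 0, 0],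
             ![-(Real.sqrt (2 * h) * Real.sin θ), Real.sqrt (2 * h) * Real.cos θ, 0, 0])} := by
  have hα₂ : 0 < α₂ := hα₁.trans hα₁₂
  have hs1 : Real.sqrt α₁ ^ 2 = α₁ := Real.sq_sqrt hα₁.le
  have hs2 : Real.sqrt (2 * h) ^ 2 = 2 * h := Real.sq_sqrt (by positivity)
  have hs1pos : 0 < Real.sqrt α₁ := Real.sqrt_pos.mpr hα₁
  have hsqrtmul : Real.sqrt (2 * α₁ * h) = Real.sqrt α₁ * Real.sqrt (2 * h) := by
    rw [show 2 * α₁ * h = α₁ * (2 * h) by ring, Real.sqrt_mul hα₁.le]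
  ext p
  obtain ⟨x, y⟩ := p
  simp only [Set.mem_setOf_eq, C1, C2, H4, Jmom1, Jmom2, Fin.sum_univ_four,
    Matrix.cons_val_zero, Matrix.cons_val_one, Matrix.head_cons, Matrix.cons_val_two,
    Matrix.tail_cons, Matrix.cons_val_three]
  constructor
  · rintro ⟨h1, h2, h3, h4, h5⟩
    have hJ2 : (x 0 * y 1 - x 1 * y 0) ^ 2 = 2 * α₁ * h := by
      rw [h4]; exact Real.sq_sqrt (by positivity)
    have h1' : α₂ * (x 0 ^ 2 + x 1 ^ 2) + α₁ * (x 2 ^ 2 + x 3 ^ 2) = α₁ * α₂ := by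
      have h1a : (α₂ * (x 0 ^ 2 + x 1 ^ 2) + α₁ * (x 2 ^ 2 + x 3 ^ 2)) * α₂
          = (α₁ * α₂) * α₂ := by
        field_simp at h1
        linear_combination α₂ * h1
      exact mul_right_cancel₀ (ne_of_gt hα₂) h1a
    have h3' : y 0 ^ 2 + y 1 ^ 2 + y 2 ^ 2 + y 3 ^ 2 = 2 * h := by linarith
    obtain ⟨hc, hd, hg, hk, haebf, hab⟩ :=
      stmt7_aux α₁ α₂ h (x 0) (x 1) (x 2) (x 3) (y 0) (y 1) (y 2) (y 3)
        hα₁ hα₂ hh h1' h3' hJ2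
    set z : ℂ := ⟨x 0, x 1⟩ with hz
    have hzabs : ‖z‖ = Real.sqrt α₁ := by
      rw [Complex.norm_def, Complex.normSq_mk]
      rw [show x 0 * x 0 + x 1 * x 1 = α₁ by linear_combination hab]
    have hzne : z ≠ 0 := by
      intro h0
      rw [h0, norm_zero] at hzabs
      exact absurd hzabs.symm (ne_of_gt hs1pos)
    set θ := z.arg with hθ
    have ha : x 0 = Real.sqrt α₁ * Real.cos θ := by
      rw [hθ, Complex.cos_arg hzne, hzabs]
      field_simp [hz]
      rfl
    have hb : x 1 = Real.sqrt α₁ * Real.sin θ := by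
      rw [hθ, Complex.sin_arg, hzabs]
      field_simp [hz]
      rfl
    have hpyth := Real.sin_sq_add_cos_sq θ
    have hE1 : y 0 * Real.cos θ + y 1 * Real.sin θ = 0 := by
      rw [ha, hb] at haebf
      have h' : Real.sqrt α₁ * (y 0 * Real.cos θ + y 1 * Real.sin θ) = Real.sqrt α₁ * 0 := by
        linear_combination haebf
      exact mul_left_cancel₀ (ne_of_gt hs1pos) h'
    have hE2 : y 1 * Real.cos θ - y 0 * Real.sin θ = Real.sqrt (2 * h) := by
      rw [ha, hb, hsqrtmul] at h4
      have h' : Real.sqrt α₁ * (y 1 * Real.cos θ - y 0 * Real.sin θ) =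
          Real.sqrt α₁ * Real.sqrt (2 * h) := by linear_combination h4
      exact mul_left_cancel₀ (ne_of_gt hs1pos) h'
    have he : y 0 = -(Real.sqrt (2 * h) * Real.sin θ) := by
      linear_combination Real.cos θ * hE1 - Real.sin θ * hE2 - y 0 * hpyth
    have hf : y 1 = Real.sqrt (2 * h) * Real.cos θ := by
      linear_combination Real.sin θ * hE1 + Real.cos θ * hE2 - y 1 * hpyth
    refine ⟨θ, Prod.ext ?_ ?_⟩ <;> funext i <;> fin_cases i
    · simpa using ha
    · simpa using hb
    · simpa using hc
    · simpa using hd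
    · simpa using he
    · simpa using hf
    · simpa using hg
    · simpa using hk
  · rintro ⟨θ, hp⟩
    rw [Prod.mk.injEq] at hp
    obtain ⟨hx, hy⟩ := hp
    subst hx; subst hy
    have hpyth := Real.sin_sq_add_cos_sq θ
    simp only [Matrix.cons_val_zero, Matrix.cons_val_one, Matrix.head_cons,
      Matrix.cons_val_two, Matrix.tail_cons, Matrix.cons_val_three]
    refine ⟨?_, ?_, ?_, ?_, ?_⟩
    · field_simp
      linear_combination α₂ * ((Real.cos θ ^ 2 + Real.sin θ ^ 2) * hs1 + α₁ * hpyth)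
    · ring
    · linear_combination (1 / 2) * (Real.sin θ ^ 2 + Real.cos θ ^ 2) * hs2 + h * hpyth
    · rw [hsqrtmul]
      linear_combination (Real.sqrt α₁ * Real.sqrt (2 * h)) * hpyth
    · ring
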